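/- The group ⟨a, b, x | x = a²b², bxⁿ = xⁿa, ax^{n+1} = x^{n+1}b, x^{2n+1} = 1⟩ is isomorphic to ⟨a, x | x^{2n+1} = 1, (a²xⁿ)² = 1⟩. -/

import Mathlib

open FreeGroup

/-- Generators for the three-generator presentation: `a`, `b`, `x`. -/
def a3 : FreeGroup (Fin 3) := FreeGroup.of 0
def b3 : FreeGroup (Fin 3) := FreeGroup.of 1
def x3 : FreeGroup (Fin 3) := FreeGroup.of 2

/-- The relations of `⟨a, b, x | x = a²b², bxⁿ = xⁿa, ax^{n+1} = x^{n+1}b, x^{2n+1} = 1⟩`. -/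
def rels3 (n : ℕ) : Set (FreeGroup (Fin 3)) :=
  {x3 * (a3 ^ 2 * b3 ^ 2)⁻¹,
   b3 * x3 ^ n * (x3 ^ n * a3)⁻¹,
   a3 * x3 ^ (n + 1) * (x3 ^ (n + 1) * b3)⁻¹,
   x3 ^ (2 * n + 1)}

/-- Generators for the two-generator presentation: `a`, `x`. -/
def a2 : FreeGroup (Fin 2) := FreeGroup.of 0
def x2 : FreeGroup (Fin 2) := FreeGroup.of 1

/-- The relations of `⟨a, x | x^{2n+1} = 1, (a²xⁿ)² = 1⟩`. -/
def rels2 (n : ℕ) : Set (FreeGroup (Fin 2)) :=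
  {x2 ^ (2 * n + 1), (a2 ^ 2 * x2 ^ n) ^ 2}

lemma rel_one {α : Type*} {rels : Set (FreeGroup α)} {r : FreeGroup α} (h : r ∈ rels) :
    PresentedGroup.mk rels r = 1 :=
  (QuotientGroup.eq_one_iff _).2 (Subgroup.subset_normalClosure h)

section maps
variable (n : ℕ)

noncomputable abbrev A2 : PresentedGroup (rels2 n) := PresentedGroup.of 0
noncomputable abbrev X2 : PresentedGroup (rels2 n) := PresentedGroup.of 1
noncomputable abbrev A3 : PresentedGroup (rels3 n) := PresentedGroup.of 0
noncomputable abbrev B3 : PresentedGroup (rels3 n) := PresentedGroup.of 1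
noncomputable abbrev X3 : PresentedGroup (rels3 n) := PresentedGroup.of 2

lemma hX2 : (X2 n) ^ (2 * n + 1) = 1 := by
  have := rel_one (rels := rels2 n) (r := x2 ^ (2 * n + 1)) (by left; rfl)
  simpa [x2, PresentedGroup.of] using this

lemma hAX2 : ((A2 n) ^ 2 * (X2 n) ^ n) ^ 2 = 1 := by
  have := rel_one (rels := rels2 n) (r := (a2 ^ 2 * x2 ^ n) ^ 2) (by right; rfl)
  simpa [a2, x2, PresentedGroup.of] using this

lemma hXinv2 : ((X2 n) ^ n)⁻¹ = (X2 n) ^ (n + 1) := by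
  apply inv_eq_of_mul_eq_one_left
  rw [← pow_add]
  have := hX2 n
  convert this using 2
  ring

lemma hkey2 : (A2 n) ^ 2 * (X2 n) ^ n * (A2 n) ^ 2 = (X2 n) ^ (n + 1) := by
  have h := hAX2 n
  have h2 : (A2 n) ^ 2 * (X2 n) ^ n * (A2 n) ^ 2 * (X2 n) ^ n = 1 := by
    rw [← h, sq ((A2 n) ^ 2 * (X2 n) ^ n)]; group
  rw [← hXinv2, eq_inv_iff_mul_eq_one]
  exact h2

/-- The target of the generators under the hom `G3 → G2`. -/
noncomputable def f3 : Fin 3 → PresentedGroup (rels2 n) :=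
  ![A2 n, (X2 n) ^ n * A2 n * ((X2 n) ^ n)⁻¹, X2 n]

lemma f3_cond : ∀ r ∈ rels3 n, FreeGroup.lift (f3 n) r = 1 := by
  intro r hr
  have hkey := hkey2 n
  have hinv := hXinv2 n
  have hX := hX2 n
  set A := A2 n with hA
  set X := X2 n with hXdef
  have e0 : FreeGroup.lift (f3 n) a3 = A := FreeGroup.lift_apply_of
  have e1 : FreeGroup.lift (f3 n) b3 = X ^ n * A * (X ^ n)⁻¹ := FreeGroup.lift_apply_of
  have e2 : FreeGroup.lift (f3 n) x3 = X := FreeGroup.lift_apply_of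
  rcases hr with rfl | rfl | rfl | rfl
  · rw [_root_.map_mul, _root_.map_inv, _root_.map_mul, _root_.map_pow, _root_.map_pow, e0, e1, e2, mul_inv_eq_one]
    have conj : (X ^ n * A * (X ^ n)⁻¹) ^ 2 = X ^ n * A ^ 2 * (X ^ n)⁻¹ := by
      rw [sq, sq]; group
    rw [conj]
    calc X = X * (X ^ (2 * n + 1)) := by rw [hX, mul_one]
    _ = X ^ (n + 1) * X ^ (n + 1) := by
        rw [← pow_succ', ← pow_add]; congr 1; ring
    _ = A ^ 2 * X ^ n * A ^ 2 * X ^ (n + 1) := by rw [hkey]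
    _ = A ^ 2 * (X ^ n * A ^ 2 * (X ^ n)⁻¹) := by rw [hinv]; group
  · simp only [_root_.map_mul, _root_.map_inv, _root_.map_pow, e0, e1, e2]
    rw [mul_inv_eq_one]
    group
  · simp only [_root_.map_mul, _root_.map_inv, _root_.map_pow, e0, e1, e2]
    rw [mul_inv_eq_one]
    have h1 : X ^ (n + 1) * X ^ n = 1 := by
      rw [← pow_add]; rw [show n + 1 + n = 2 * n + 1 by ring]; exact hX
    calc A * X ^ (n + 1) = A * (X ^ n)⁻¹ := by rw [hinv]
    _ = X ^ (n + 1) * X ^ n * A * (X ^ n)⁻¹ := by rw [h1]; group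
    _ = X ^ (n + 1) * (X ^ n * A * (X ^ n)⁻¹) := by group
  · rw [_root_.map_pow, e2]; exact hX

/-- The target of the generators under the hom `G2 → G3`. -/
noncomputable def f2 : Fin 2 → PresentedGroup (rels3 n) := ![A3 n, X3 n]

lemma hxr3 : (X3 n) = (A3 n) ^ 2 * (B3 n) ^ 2 := by
  have := rel_one (rels := rels3 n) (r := x3 * (a3 ^ 2 * b3 ^ 2)⁻¹) (by left; rfl)
  simp only [a3, b3, x3, _root_.map_mul, _root_.map_inv, _root_.map_pow] at this
  rw [mul_inv_eq_one] at this
  exact this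

lemma hbr3 : (B3 n) * (X3 n) ^ n = (X3 n) ^ n * (A3 n) := by
  have := rel_one (rels := rels3 n) (r := b3 * x3 ^ n * (x3 ^ n * a3)⁻¹)
    (by right; left; rfl)
  simp only [a3, b3, x3, _root_.map_mul, _root_.map_inv, _root_.map_pow] at this
  rw [mul_inv_eq_one] at this
  exact this

lemma hX3 : (X3 n) ^ (2 * n + 1) = 1 := by
  have := rel_one (rels := rels3 n) (r := x3 ^ (2 * n + 1))
    (by right; right; right; rfl)
  simpa [x3, PresentedGroup.of] using this

lemma f2_cond : ∀ r ∈ rels2 n, FreeGroup.lift (f2 n) r = 1 := by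
  intro r hr
  set A := A3 n with hA
  set B := B3 n with hB
  set X := X3 n with hXdef
  have e0 : FreeGroup.lift (f2 n) a2 = A := FreeGroup.lift_apply_of
  have e1 : FreeGroup.lift (f2 n) x2 = X := FreeGroup.lift_apply_of
  have hX := hX3 n
  rcases hr with rfl | rfl
  · rw [_root_.map_pow, e1]; exact hX
  · rw [_root_.map_pow, _root_.map_mul, _root_.map_pow, _root_.map_pow, e0, e1]
    -- b = xⁿ a x⁻ⁿ
    have hb : B = X ^ n * A * (X ^ n)⁻¹ := by
      rw [eq_comm, mul_inv_eq_iff_eq_mul, eq_comm]; exact hbr3 n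
    have hxx : X = A ^ 2 * X ^ n * A ^ 2 * (X ^ n)⁻¹ := by
      have h' : X = A ^ 2 * B ^ 2 := hxr3 n
      rw [hb] at h'
      calc X = A ^ 2 * (X ^ n * A * (X ^ n)⁻¹) ^ 2 := h'
      _ = A ^ 2 * X ^ n * A ^ 2 * (X ^ n)⁻¹ := by rw [sq, sq]; group
    have hkey : A ^ 2 * X ^ n * A ^ 2 = X * X ^ n := by
      calc A ^ 2 * X ^ n * A ^ 2 = (A ^ 2 * X ^ n * A ^ 2 * (X ^ n)⁻¹) * X ^ n := by group
      _ = X * X ^ n := by rw [← hxx]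
    calc (A ^ 2 * X ^ n) ^ 2 = A ^ 2 * X ^ n * A ^ 2 * X ^ n := by rw [sq]; group
    _ = X * X ^ n * X ^ n := by rw [hkey]
    _ = X ^ (2 * n + 1) := by rw [← pow_succ', ← pow_add]; congr 1; ring
    _ = 1 := hX

end maps

/-- `⟨a, b, x | x = a²b², bxⁿ = xⁿa, ax^{n+1} = x^{n+1}b, x^{2n+1} = 1⟩` is isomorphic to
`⟨a, x | x^{2n+1} = 1, (a²xⁿ)² = 1⟩`. -/
theorem three_gen_iso_two_gen (n : ℕ) (hn : 0 < n) :
    Nonempty (PresentedGroup (rels3 n) ≃* PresentedGroup (rels2 n)) := by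
  let φ : PresentedGroup (rels3 n) →* PresentedGroup (rels2 n) :=
    PresentedGroup.toGroup (f3_cond n)
  let ψ : PresentedGroup (rels2 n) →* PresentedGroup (rels3 n) :=
    PresentedGroup.toGroup (f2_cond n)
  have hb : B3 n = (X3 n) ^ n * A3 n * ((X3 n) ^ n)⁻¹ := by
    rw [eq_comm, mul_inv_eq_iff_eq_mul, eq_comm]; exact hbr3 n
  have h1 : ψ.comp φ = MonoidHom.id _ := by
    ext i
    fin_cases i
    · show ψ (φ (PresentedGroup.of 0)) = PresentedGroup.of 0
      simp only [φ, ψ, PresentedGroup.toGroup.of]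
      rfl
    · show ψ (φ (PresentedGroup.of 1)) = PresentedGroup.of 1
      simp only [φ, ψ, PresentedGroup.toGroup.of]
      show ψ ((X2 n) ^ n * A2 n * ((X2 n) ^ n)⁻¹) = B3 n
      rw [_root_.map_mul, _root_.map_mul, _root_.map_inv, _root_.map_pow]
      have ea : ψ (A2 n) = A3 n := PresentedGroup.toGroup.of (f2_cond n)
      have ex : ψ (X2 n) = X3 n := PresentedGroup.toGroup.of (f2_cond n)
      rw [ea, ex, ← hb]
    · show ψ (φ (PresentedGroup.of 2)) = PresentedGroup.of 2
      simp only [φ, ψ, PresentedGroup.toGroup.of]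
      rfl
  have h2 : φ.comp ψ = MonoidHom.id _ := by
    ext i
    fin_cases i
    · show φ (ψ (PresentedGroup.of 0)) = PresentedGroup.of 0
      simp only [φ, ψ, PresentedGroup.toGroup.of]
      rfl
    · show φ (ψ (PresentedGroup.of 1)) = PresentedGroup.of 1
      simp only [φ, ψ, PresentedGroup.toGroup.of]
      rfl
  exact ⟨MonoidHom.toMulEquiv φ ψ h1 h2⟩
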